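/- (Claim (⋆) in the proof of Lemma 4.3) Let S be a finite spin space and let Φ be a translation invariant, absolutely summable interaction potential on ℤ^d. Let A ⊆ Λ ⊂ ℤ^d be finite sets, β ≥ 0, λ ∈ Φ_A(Ω_A), and ω̄ ∈ Ω_{Λ∖A}. Then the conditional Gibbs probability satisfies μ_{Λ,β}( {ω : Φ_A(ω_A) = λ} | {ω : ω_{Λ∖A} = ω̄} ) ≥ c_λ(β), where c_λ(β) := #{η ∈ Ω_A : Φ_A(η) = λ} / ( e^{2β|A|‖Φ‖} · Σ_{η ∈ Ω_A} e^{−β(Φ_A(η) − λ)} ); in particular this lower bound depends on neither Λ nor ω̄. -/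

import Mathlib

open Filter Topology

/-- The lattice `ℤ^d`. -/
abbrev Zd (d : ℕ) := Fin d → ℤ

/-- The configuration space `Ω_Λ = S^Λ` for a finite `Λ ⊆ ℤ^d`. -/
abbrev Config (S : Type) {d : ℕ} (Λ : Finset (Zd d)) : Type := {x // x ∈ Λ} → S

/-- Restriction of a configuration on `Λ` to a subset `A ⊆ Λ`. -/
def restrictCfg {S : Type} {d : ℕ} {Λ A : Finset (Zd d)} (h : A ⊆ Λ) (ω : Config S Λ) :
    Config S A := fun a => ω ⟨a.1, h a.2⟩

/-- An interaction potential: a function `Φ_A : Ω_A → ℝ` for each finite `A ⊆ ℤ^d`. -/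
abbrev Pot (d : ℕ) (S : Type) := (A : Finset (Zd d)) → Config S A → ℝ

/-- The sup norm `‖Φ_A‖_∞`. -/
noncomputable def potNorm {d : ℕ} {S : Type} [Fintype S] [Nonempty S] (Φ : Pot d S)
    (A : Finset (Zd d)) : ℝ := ⨆ ω : Config S A, |Φ A ω|

/-- Translate of a finite set: `A + x`. -/
def shiftSet {d : ℕ} (x : Zd d) (A : Finset (Zd d)) : Finset (Zd d) := A.image (· + x)

/-- Translation invariance of a potential. -/
def TransInv {d : ℕ} {S : Type} (Φ : Pot d S) : Prop :=
  ∀ (x : Zd d) (A : Finset (Zd d)) (ω : Config S (shiftSet x A)),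
    Φ (shiftSet x A) ω = Φ A (fun a => ω ⟨a.1 + x, Finset.mem_image_of_mem _ a.2⟩)

/-- Absolute summability: `Σ_{A ∋ 0} ‖Φ_A‖ < ∞`. -/
def AbsSummable {d : ℕ} {S : Type} [Fintype S] [Nonempty S] (Φ : Pot d S) : Prop :=
  Summable (fun A : {A : Finset (Zd d) // (0 : Zd d) ∈ A} => potNorm Φ A.1)

/-- `‖Φ‖ = Σ_{A ∋ 0} ‖Φ_A‖`. -/
noncomputable def potFullNorm {d : ℕ} {S : Type} [Fintype S] [Nonempty S] (Φ : Pot d S) : ℝ :=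
  ∑' A : {A : Finset (Zd d) // (0 : Zd d) ∈ A}, potNorm Φ A.1

/-- The Hamiltonian `H_Λ(ω) = Σ_{A ⊆ Λ} Φ_A(ω_A)`. -/
noncomputable def Ham {d : ℕ} {S : Type} (Φ : Pot d S) (Λ : Finset (Zd d))
    (ω : Config S Λ) : ℝ :=
  ∑ A ∈ Λ.powerset.attach, Φ A.1 (restrictCfg (Finset.mem_powerset.mp A.2) ω)

/-- The hypercube `Λ_n = [-n, n]^d ∩ ℤ^d`. -/
noncomputable def cube (d n : ℕ) : Finset (Zd d) := Fintype.piFinset fun _ => Finset.Icc (-(n : ℤ)) n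

/-- Energy per site `h_n(ω) = H_n(ω)/|Λ_n|`. -/
noncomputable def enDensity {d : ℕ} {S : Type} (Φ : Pot d S) (n : ℕ)
    (ω : Config S (cube d n)) : ℝ := Ham Φ (cube d n) ω / (cube d n).card

/-- `𝕄_n(B) = #{ω ∈ Ω_n : h_n(ω) ∈ B}`. -/
noncomputable def Mcount {d : ℕ} {S : Type} [Fintype S] (Φ : Pot d S) (n : ℕ)
    (B : Set ℝ) : ℕ := Nat.card {ω : Config S (cube d n) // enDensity Φ n ω ∈ B}

/-- The sequence `(1/|Λ_n|) log 𝕄_n(B)`, with the convention `log 0 = -∞`. -/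
noncomputable def mSeq {d : ℕ} {S : Type} [Fintype S] (Φ : Pot d S) (B : Set ℝ)
    (n : ℕ) : EReal :=
  if Mcount Φ n B = 0 then ⊥
  else ((Real.log (Mcount Φ n B) / (cube d n).card : ℝ) : EReal)

/-- `m(B) = lim_n (1/|Λ_n|) log 𝕄_n(B)` (defined via `limsup`; the content that this is
an actual limit is asserted in the theorems). -/
noncomputable def mFun {d : ℕ} {S : Type} [Fintype S] (Φ : Pot d S) (B : Set ℝ) : EReal :=
  Filter.limsup (mSeq Φ B) Filter.atTop

/-- The microcanonical entropy `s(u) = lim_{r→0⁺} m((u-r, u+r))` (defined via `limsup`). -/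
noncomputable def entropy {d : ℕ} {S : Type} [Fintype S] (Φ : Pot d S) (u : ℝ) : EReal :=
  Filter.limsup (fun r : ℝ => mFun Φ (Set.Ioo (u - r) (u + r))) (nhdsWithin 0 (Set.Ioi 0))

/-- The partition function `Z_{Λ,β}`. -/
noncomputable def Zfun {d : ℕ} {S : Type} [Fintype S] (Φ : Pot d S) (Λ : Finset (Zd d))
    (β : ℝ) : ℝ := ∑ ω : Config S Λ, Real.exp (-β * Ham Φ Λ ω)

/-- The finite-volume pressure `ψ_Λ(β) = -(1/|Λ|) log Z_{Λ,β}`. -/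
noncomputable def pressureFin {d : ℕ} {S : Type} [Fintype S] (Φ : Pot d S)
    (Λ : Finset (Zd d)) (β : ℝ) : ℝ := -Real.log (Zfun Φ Λ β) / Λ.card

/-- The pressure sequence `-(1/|Λ_n|) log Z_{Λ_n,β}`. -/
noncomputable def pressureSeq {d : ℕ} {S : Type} [Fintype S] (Φ : Pot d S) (β : ℝ)
    (n : ℕ) : ℝ := pressureFin Φ (cube d n) β

/-- Gibbs expectation `⟨f⟩_{Λ,β}`. -/
noncomputable def gibbsExp {d : ℕ} {S : Type} [Fintype S] (Φ : Pot d S)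
    (Λ : Finset (Zd d)) (β : ℝ) (f : Config S Λ → ℝ) : ℝ :=
  (∑ ω : Config S Λ, f ω * Real.exp (-β * Ham Φ Λ ω)) / Zfun Φ Λ β

/-- Gibbs variance `Var_{Λ,β}(f)`. -/
noncomputable def gibbsVar {d : ℕ} {S : Type} [Fintype S] (Φ : Pot d S)
    (Λ : Finset (Zd d)) (β : ℝ) (f : Config S Λ → ℝ) : ℝ :=
  gibbsExp Φ Λ β (fun ω => (f ω) ^ 2) - (gibbsExp Φ Λ β f) ^ 2

/-- Gibbs covariance `Cov_{Λ,β}(f,g)`. -/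
noncomputable def gibbsCov {d : ℕ} {S : Type} [Fintype S] (Φ : Pot d S)
    (Λ : Finset (Zd d)) (β : ℝ) (f g : Config S Λ → ℝ) : ℝ :=
  gibbsExp Φ Λ β (fun ω => f ω * g ω) - gibbsExp Φ Λ β f * gibbsExp Φ Λ β g

/-- Gibbs probability `μ_{Λ,β}(E)`. -/
noncomputable def gibbsProb {d : ℕ} {S : Type} [Fintype S] (Φ : Pot d S)
    (Λ : Finset (Zd d)) (β : ℝ) (E : Set (Config S Λ)) : ℝ :=
  (∑ ω : Config S Λ, E.indicator (fun ω => Real.exp (-β * Ham Φ Λ ω)) ω) / Zfun Φ Λ β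

/-- Positive correlation of the potential. -/
def PosCorr {d : ℕ} {S : Type} [Fintype S] (Φ : Pot d S) : Prop :=
  ∀ (Λ A B : Finset (Zd d)) (hA : A ⊆ Λ) (hB : B ⊆ Λ) (β : ℝ), 0 < β →
    0 ≤ gibbsCov Φ Λ β (fun ω => Φ A (restrictCfg hA ω)) (fun ω => Φ B (restrictCfg hB ω))

/-- `#M_n(u) = #{ω ∈ Ω_n : H_n(ω) ≤ |Λ_n| u}`. -/
noncomputable def MvolCount {d : ℕ} {S : Type} [Fintype S] (Φ : Pot d S) (n : ℕ)
    (u : ℝ) : ℕ :=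
  Nat.card {ω : Config S (cube d n) // Ham Φ (cube d n) ω ≤ (cube d n).card * u}

/-- The sequence `(1/|Λ_n|) log #M_n(u)`, with the convention `log 0 = -∞`. -/
noncomputable def sigmaSeq {d : ℕ} {S : Type} [Fintype S] (Φ : Pot d S) (u : ℝ)
    (n : ℕ) : EReal :=
  if MvolCount Φ n u = 0 then ⊥
  else ((Real.log (MvolCount Φ n u) / (cube d n).card : ℝ) : EReal)

/-- `σ(u) = lim_n (1/|Λ_n|) log #M_n(u)` (defined via `limsup`). -/
noncomputable def sigmaFun {d : ℕ} {S : Type} [Fintype S] (Φ : Pot d S) (u : ℝ) : EReal :=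
  Filter.limsup (sigmaSeq Φ u) Filter.atTop

section Aux
variable {d : ℕ} {S : Type} [Fintype S] [Nonempty S]

/-- Gluing a configuration on `A` with one on `Λ \ A`. -/
def glueCfg {Λ A : Finset (Zd d)} (hAΛ : A ⊆ Λ) (η : Config S A) (ωbar : Config S (Λ \ A)) :
    Config S Λ := fun z =>
  if h : z.1 ∈ A then η ⟨z.1, h⟩ else ωbar ⟨z.1, Finset.mem_sdiff.mpr ⟨z.2, h⟩⟩

lemma restrict_glue_A {Λ A : Finset (Zd d)} (hAΛ : A ⊆ Λ) (η : Config S A)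
    (ωbar : Config S (Λ \ A)) : restrictCfg hAΛ (glueCfg hAΛ η ωbar) = η := by
  funext a; simp [restrictCfg, glueCfg, a.2]

lemma restrict_glue_sdiff {Λ A : Finset (Zd d)} (hAΛ : A ⊆ Λ) (η : Config S A)
    (ωbar : Config S (Λ \ A)) :
    restrictCfg (Finset.sdiff_subset) (glueCfg hAΛ η ωbar) = ωbar := by
  funext a
  have h2 := Finset.mem_sdiff.mp a.2
  simp [restrictCfg, glueCfg, h2.2]

lemma glue_restrict {Λ A : Finset (Zd d)} (hAΛ : A ⊆ Λ) (ωbar : Config S (Λ \ A))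
    (ω : Config S Λ) (h : restrictCfg (Finset.sdiff_subset) ω = ωbar) :
    glueCfg hAΛ (restrictCfg hAΛ ω) ωbar = ω := by
  funext z
  by_cases h1 : z.1 ∈ A
  · simp [glueCfg, h1, restrictCfg]
  · simp [glueCfg, h1, ← h, restrictCfg]

lemma potNorm_nonneg (Φ : Pot d S) (A : Finset (Zd d)) : 0 ≤ potNorm Φ A :=
  Real.iSup_nonneg fun _ => abs_nonneg _

lemma abs_le_potNorm (Φ : Pot d S) (A : Finset (Zd d)) (ω : Config S A) :
    |Φ A ω| ≤ potNorm Φ A :=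
  le_ciSup (f := fun ω : Config S A => |Φ A ω|) (Set.Finite.bddAbove (Set.finite_range _)) ω

lemma shiftSet_shiftSet_neg {A : Finset (Zd d)} (x : Zd d) :
    shiftSet x (shiftSet (-x) A) = A := by
  simp [shiftSet, Finset.image_image]
  ext z; simp

lemma potNorm_shift (Φ : Pot d S) (hTI : TransInv Φ) (x : Zd d) (A : Finset (Zd d)) :
    potNorm Φ (shiftSet x A) = potNorm Φ A := by
  apply le_antisymm
  · apply ciSup_le
    intro ω
    rw [hTI]
    exact abs_le_potNorm Φ A _
  · apply ciSup_le
    intro η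
    -- build ω on shiftSet x A mapping to η
    have hmem : ∀ b : {z // z ∈ shiftSet x A}, b.1 - x ∈ A := by
      intro b
      obtain ⟨a, ha, hax⟩ := Finset.mem_image.mp b.2
      simpa [← hax] using ha
    set ω : Config S (shiftSet x A) := fun b => η ⟨b.1 - x, hmem b⟩ with hω
    have : Φ A η = Φ (shiftSet x A) ω := by
      rw [hTI]
      congr 1
      funext a
      congr 1
      ext
      simp
    rw [this]
    exact abs_le_potNorm Φ _ _

lemma potFullNorm_nonneg (Φ : Pot d S) : 0 ≤ potFullNorm Φ :=
  tsum_nonneg fun _ => potNorm_nonneg Φ _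

/-- key summation bound: sum of norms over sets containing a fixed point is ≤ ‖Φ‖. -/
lemma sum_potNorm_le (Φ : Pot d S) (hTI : TransInv Φ) (hAS : AbsSummable Φ)
    (x : Zd d) (T : Finset (Finset (Zd d))) (hT : ∀ B ∈ T, x ∈ B) :
    ∑ B ∈ T, potNorm Φ B ≤ potFullNorm Φ := by
  have hinj : Set.InjOn (shiftSet (-x)) T := by
    intro B1 _ B2 _ h
    have := congrArg (shiftSet x) h
    rwa [shiftSet_shiftSet_neg, shiftSet_shiftSet_neg] at this
  have h1 : ∑ B ∈ T, potNorm Φ B = ∑ C ∈ T.image (shiftSet (-x)), potNorm Φ C := by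
    rw [Finset.sum_image (fun a ha b hb h => hinj ha hb h)]
    apply Finset.sum_congr rfl
    intro B hB
    rw [← shiftSet_shiftSet_neg (A := B) x, potNorm_shift Φ hTI, shiftSet_shiftSet_neg]
  have h0 : ∀ C ∈ T.image (shiftSet (-x)), (0 : Zd d) ∈ C := by
    intro C hC
    obtain ⟨B, hB, rfl⟩ := Finset.mem_image.mp hC
    exact Finset.mem_image.mpr ⟨x, hT B hB, by simp⟩
  rw [h1]
  have h2 : ∑ C ∈ T.image (shiftSet (-x)), potNorm Φ C =
      ∑ C ∈ (T.image (shiftSet (-x))).subtype (fun C => (0 : Zd d) ∈ C), potNorm Φ C.1 := by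
    rw [Finset.sum_subtype_eq_sum_filter]
    rw [Finset.filter_true_of_mem h0]
  rw [h2]
  exact Summable.sum_le_tsum _ (fun _ _ => potNorm_nonneg Φ _) hAS

end Aux

section Aux2
variable {d : ℕ} {S : Type} [Fintype S] [Nonempty S]

lemma sum_potNorm_meet_le (Φ : Pot d S) (hTI : TransInv Φ) (hAS : AbsSummable Φ)
    (Λ A : Finset (Zd d)) :
    ∑ B ∈ Λ.powerset.filter (fun B => B ∩ A ≠ ∅), potNorm Φ B
      ≤ A.card * potFullNorm Φ := by
  calc ∑ B ∈ Λ.powerset.filter (fun B => B ∩ A ≠ ∅), potNorm Φ B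
      ≤ ∑ B ∈ Λ.powerset.filter (fun B => B ∩ A ≠ ∅),
          ∑ x ∈ A, if x ∈ B then potNorm Φ B else 0 := by
        apply Finset.sum_le_sum
        intro B hB
        have hBA : B ∩ A ≠ ∅ := (Finset.mem_filter.mp hB).2
        obtain ⟨x0, hx0⟩ := Finset.nonempty_iff_ne_empty.mpr hBA
        have hx0B : x0 ∈ B := (Finset.mem_inter.mp hx0).1
        have hx0A : x0 ∈ A := (Finset.mem_inter.mp hx0).2
        calc potNorm Φ B = if x0 ∈ B then potNorm Φ B else 0 := by rw [if_pos hx0B]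
          _ ≤ ∑ x ∈ A, if x ∈ B then potNorm Φ B else 0 :=
            Finset.single_le_sum (f := fun x => if x ∈ B then potNorm Φ B else 0)
              (fun i _ => by split <;> simp [potNorm_nonneg]) hx0A
    _ = ∑ x ∈ A, ∑ B ∈ Λ.powerset.filter (fun B => B ∩ A ≠ ∅),
          if x ∈ B then potNorm Φ B else 0 := Finset.sum_comm
    _ ≤ ∑ _x ∈ A, potFullNorm Φ := by
        apply Finset.sum_le_sum
        intro x _
        rw [← Finset.sum_filter]
        exact sum_potNorm_le Φ hTI hAS x _ (fun B hB => (Finset.mem_filter.mp hB).2)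
    _ = A.card * potFullNorm Φ := by rw [Finset.sum_const, nsmul_eq_mul]

end Aux2

section Aux3
variable {d : ℕ} {S : Type} [Fintype S] [Nonempty S] (Φ : Pot d S)
  {Λ A : Finset (Zd d)} (hAΛ : A ⊆ Λ)

/-- The part of the Hamiltonian from sets meeting `A`. -/
noncomputable def hamIn (ωbar : Config S (Λ \ A)) (η : Config S A) : ℝ :=
  ∑ B ∈ Λ.powerset.attach.filter (fun B => B.1 ∩ A ≠ ∅),
    Φ B.1 (restrictCfg (Finset.mem_powerset.mp B.2) (glueCfg hAΛ η ωbar))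

/-- The part of the Hamiltonian from sets not meeting `A`. -/
noncomputable def hamOut (ωbar : Config S (Λ \ A)) (η : Config S A) : ℝ :=
  ∑ B ∈ Λ.powerset.attach.filter (fun B => ¬ (B.1 ∩ A ≠ ∅)),
    Φ B.1 (restrictCfg (Finset.mem_powerset.mp B.2) (glueCfg hAΛ η ωbar))

/-- `hamIn` minus the `A` term. -/
noncomputable def hamRes (ωbar : Config S (Λ \ A)) (η : Config S A) : ℝ :=
  ∑ B ∈ (Λ.powerset.attach.filter (fun B => B.1 ∩ A ≠ ∅)).erase
      ⟨A, Finset.mem_powerset.mpr hAΛ⟩,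
    Φ B.1 (restrictCfg (Finset.mem_powerset.mp B.2) (glueCfg hAΛ η ωbar))

lemma ham_glue_eq (ωbar : Config S (Λ \ A)) (η : Config S A) :
    Ham Φ Λ (glueCfg hAΛ η ωbar) = hamIn Φ hAΛ ωbar η + hamOut Φ hAΛ ωbar η :=
  (Finset.sum_filter_add_sum_filter_not _ _ _).symm

lemma hamOut_const (ωbar : Config S (Λ \ A)) (η₁ η₂ : Config S A) :
    hamOut Φ hAΛ ωbar η₁ = hamOut Φ hAΛ ωbar η₂ := by
  apply Finset.sum_congr rfl
  intro B hB
  have hdisj : B.1 ∩ A = ∅ := not_not.mp (Finset.mem_filter.mp hB).2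
  congr 1
  funext b
  have hbA : b.1 ∉ A := by
    intro h
    have : b.1 ∈ B.1 ∩ A := Finset.mem_inter.mpr ⟨b.2, h⟩
    simp [hdisj] at this
  simp [glueCfg, restrictCfg, hbA]

lemma hamIn_eq (hA : A.Nonempty) (ωbar : Config S (Λ \ A)) (η : Config S A) :
    hamIn Φ hAΛ ωbar η = Φ A η + hamRes Φ hAΛ ωbar η := by
  have hmem : (⟨A, Finset.mem_powerset.mpr hAΛ⟩ : {x // x ∈ Λ.powerset}) ∈
      Λ.powerset.attach.filter (fun B => B.1 ∩ A ≠ ∅) := by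
    refine Finset.mem_filter.mpr ⟨Finset.mem_attach _ _, ?_⟩
    simpa [Finset.inter_self] using hA.ne_empty
  rw [hamIn, ← Finset.add_sum_erase _ _ hmem]
  congr 1
  exact congrArg (Φ A) (restrict_glue_A hAΛ η ωbar)

lemma abs_hamRes_le (hTI : TransInv Φ) (hAS : AbsSummable Φ)
    (ωbar : Config S (Λ \ A)) (η : Config S A) :
    |hamRes Φ hAΛ ωbar η| ≤ A.card * potFullNorm Φ := by
  calc |hamRes Φ hAΛ ωbar η|
      ≤ ∑ B ∈ (Λ.powerset.attach.filter (fun B => B.1 ∩ A ≠ ∅)).erase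
          ⟨A, Finset.mem_powerset.mpr hAΛ⟩,
          |Φ B.1 (restrictCfg (Finset.mem_powerset.mp B.2) (glueCfg hAΛ η ωbar))| :=
        Finset.abs_sum_le_sum_abs _ _
    _ ≤ ∑ B ∈ (Λ.powerset.attach.filter (fun B => B.1 ∩ A ≠ ∅)).erase
          ⟨A, Finset.mem_powerset.mpr hAΛ⟩, potNorm Φ B.1 :=
        Finset.sum_le_sum fun B _ => abs_le_potNorm Φ B.1 _
    _ ≤ ∑ B ∈ Λ.powerset.attach.filter (fun B => B.1 ∩ A ≠ ∅), potNorm Φ B.1 :=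
        Finset.sum_le_sum_of_subset_of_nonneg (Finset.erase_subset _ _)
          (fun B _ _ => potNorm_nonneg Φ B.1)
    _ = ∑ B ∈ Λ.powerset.filter (fun B => B ∩ A ≠ ∅), potNorm Φ B := by
        rw [Finset.sum_filter, Finset.sum_attach Λ.powerset
          (fun B => if B ∩ A ≠ ∅ then potNorm Φ B else 0), ← Finset.sum_filter]
    _ ≤ A.card * potFullNorm Φ := sum_potNorm_meet_le Φ hTI hAS Λ A

end Aux3


/-- **Claim (⋆) in the proof of Lemma 4.3**: the conditional Gibbs probability that
`Φ_A = λ`, given the configuration `ω̄` outside `A`, is bounded below by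
`c_λ(β) = #{Φ_A = λ} / (e^{2β|A|‖Φ‖} Σ_η e^{-β(Φ_A(η) - λ)})`, which depends on
neither `Λ` nor `ω̄`. -/
theorem claim_star {d : ℕ} (hd : 0 < d) {S : Type} [Fintype S] [Nonempty S]
    (Φ : Pot d S) (hTI : TransInv Φ) (hAS : AbsSummable Φ)
    (hΦ0 : ∀ ω : Config S (∅ : Finset (Zd d)), Φ ∅ ω = 0)
    (A Λ : Finset (Zd d)) (hA : A.Nonempty) (hAΛ : A ⊆ Λ)
    (β : ℝ) (hβ : 0 ≤ β) (lam : ℝ) (hlam : ∃ η : Config S A, Φ A η = lam)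
    (ωbar : Config S (Λ \ A)) :
    (Nat.card {η : Config S A // Φ A η = lam} : ℝ) /
        (Real.exp (2 * β * A.card * potFullNorm Φ) *
          ∑ η : Config S A, Real.exp (-β * (Φ A η - lam))) ≤
      gibbsProb Φ Λ β ({ω | Φ A (restrictCfg hAΛ ω) = lam} ∩
          {ω | restrictCfg (Finset.sdiff_subset) ω = ωbar}) /
        gibbsProb Φ Λ β {ω | restrictCfg (Finset.sdiff_subset) ω = ωbar} := by
  classical
  set f : Config S Λ → ℝ := fun ω => Real.exp (-β * Ham Φ Λ ω) with hf
  set g : Config S A → ℝ := fun η => Real.exp (-β * Ham Φ Λ (glueCfg hAΛ η ωbar)) with hg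
  set F : Set (Config S Λ) := {ω | restrictCfg (Finset.sdiff_subset) ω = ωbar} with hF
  set E : Set (Config S Λ) := {ω | Φ A (restrictCfg hAΛ ω) = lam} with hE
  -- the two sum conversion identities
  have hsumF : ∑ ω : Config S Λ, F.indicator f ω = ∑ η : Config S A, g η := by
    calc ∑ ω : Config S Λ, F.indicator f ω
        = ∑ ω ∈ Finset.univ.filter (· ∈ F), f ω := by
          rw [Finset.sum_filter]; simp [Set.indicator_apply]
      _ = ∑ η : Config S A, g η := by
          apply Finset.sum_nbij' (i := fun ω => restrictCfg hAΛ ω)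
            (j := fun η => glueCfg hAΛ η ωbar)
          · intro a _; exact Finset.mem_univ _
          · intro η _
            refine Finset.mem_filter.mpr ⟨Finset.mem_univ _, ?_⟩
            exact restrict_glue_sdiff hAΛ η ωbar
          · intro ω hω
            exact glue_restrict hAΛ ωbar ω (Finset.mem_filter.mp hω).2
          · intro η _
            exact restrict_glue_A hAΛ η ωbar
          · intro ω hω
            simp only [hg, hf]
            rw [glue_restrict hAΛ ωbar ω (Finset.mem_filter.mp hω).2]
  have hsumEF : ∑ ω : Config S Λ, (E ∩ F).indicator f ω
      = ∑ η ∈ Finset.univ.filter (fun η : Config S A => Φ A η = lam), g η := by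
    calc ∑ ω : Config S Λ, (E ∩ F).indicator f ω
        = ∑ ω ∈ Finset.univ.filter (· ∈ E ∩ F), f ω := by
          rw [Finset.sum_filter]; simp [Set.indicator_apply]
      _ = ∑ η ∈ Finset.univ.filter (fun η : Config S A => Φ A η = lam), g η := by
          apply Finset.sum_nbij' (i := fun ω => restrictCfg hAΛ ω)
            (j := fun η => glueCfg hAΛ η ωbar)
          · intro ω hω
            have h2 := (Finset.mem_filter.mp hω).2
            exact Finset.mem_filter.mpr ⟨Finset.mem_univ _, h2.1⟩
          · intro η hη
            refine Finset.mem_filter.mpr ⟨Finset.mem_univ _, ?_, ?_⟩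
            · show Φ A (restrictCfg hAΛ (glueCfg hAΛ η ωbar)) = lam
              rw [restrict_glue_A hAΛ η ωbar]
              exact (Finset.mem_filter.mp hη).2
            · exact restrict_glue_sdiff hAΛ η ωbar
          · intro ω hω
            exact glue_restrict hAΛ ωbar ω ((Finset.mem_filter.mp hω).2).2
          · intro η _
            exact restrict_glue_A hAΛ η ωbar
          · intro ω hω
            simp only [hg, hf]
            rw [glue_restrict hAΛ ωbar ω ((Finset.mem_filter.mp hω).2).2]
  -- positivity of Z
  have hZ : 0 < Zfun Φ Λ β :=
    Finset.sum_pos (fun ω _ => Real.exp_pos _) Finset.univ_nonempty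
  -- rewrite the ratio
  set sig2 : ℝ := ∑ η : Config S A, g η with hsig2
  set sig1 : ℝ := ∑ η ∈ Finset.univ.filter (fun η : Config S A => Φ A η = lam), g η with hsig1
  have hsig2pos : 0 < sig2 := Finset.sum_pos (fun η _ => Real.exp_pos _) Finset.univ_nonempty
  have hratio : gibbsProb Φ Λ β (E ∩ F) / gibbsProb Φ Λ β F = sig1 / sig2 := by
    unfold gibbsProb
    rw [hsumF, hsumEF]
    rw [div_div_div_eq]
    rw [mul_comm (Zfun Φ Λ β) sig2, mul_div_mul_right _ _ hZ.ne']
  rw [hratio]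
  -- decompose the Hamiltonian
  set K : ℝ := (A.card : ℝ) * potFullNorm Φ with hK
  set η₀ : Config S A := Classical.arbitrary _ with hη₀
  set C : ℝ := hamOut Φ hAΛ ωbar η₀ with hC
  set R : Config S A → ℝ := fun η => hamRes Φ hAΛ ωbar η with hR
  set g' : Config S A → ℝ := fun η => Real.exp (-β * (Φ A η + R η)) with hg'
  have hgdecomp : ∀ η, g η = Real.exp (-β * C) * g' η := by
    intro η
    simp only [hg, hg']
    rw [ham_glue_eq Φ hAΛ ωbar η, hamIn_eq Φ hAΛ hA ωbar η,
      hamOut_const Φ hAΛ ωbar η η₀, ← Real.exp_add]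
    congr 1
    simp only [hR]
    ring
  have hRK : ∀ η, |R η| ≤ K := fun η => abs_hamRes_le Φ hAΛ hTI hAS ωbar η
  set T : ℝ := ∑ η : Config S A, Real.exp (-β * Φ A η) with hT
  have hTpos : 0 < T := Finset.sum_pos (fun η _ => Real.exp_pos _) Finset.univ_nonempty
  -- upper bound on sig2
  have hsig2ub : sig2 ≤ Real.exp (-β * C) * (Real.exp (β * K) * T) := by
    rw [hsig2]
    have : ∀ η : Config S A, g η ≤ Real.exp (-β * C) *
        (Real.exp (β * K) * Real.exp (-β * Φ A η)) := by
      intro η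
      rw [hgdecomp η]
      apply mul_le_mul_of_nonneg_left _ (Real.exp_pos _).le
      simp only [hg']
      rw [← Real.exp_add]
      apply Real.exp_le_exp.mpr
      have h1 : -K ≤ R η := (abs_le.mp (hRK η)).1
      nlinarith
    calc ∑ η : Config S A, g η ≤ ∑ η : Config S A, Real.exp (-β * C) *
          (Real.exp (β * K) * Real.exp (-β * Φ A η)) := Finset.sum_le_sum fun η _ => this η
      _ = Real.exp (-β * C) * (Real.exp (β * K) * T) := by
          rw [hT, Finset.mul_sum, Finset.mul_sum]
  -- lower bound on sig1
  set N : ℝ := ((Finset.univ.filter (fun η : Config S A => Φ A η = lam)).card : ℝ) with hN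
  have hsig1lb : Real.exp (-β * C) * (N * Real.exp (-β * (lam + K))) ≤ sig1 := by
    rw [hsig1]
    have : ∀ η ∈ Finset.univ.filter (fun η : Config S A => Φ A η = lam),
        Real.exp (-β * C) * Real.exp (-β * (lam + K)) ≤ g η := by
      intro η hη
      rw [hgdecomp η]
      apply mul_le_mul_of_nonneg_left _ (Real.exp_pos _).le
      simp only [hg']
      apply Real.exp_le_exp.mpr
      have hΦη : Φ A η = lam := (Finset.mem_filter.mp hη).2
      rw [hΦη]
      have : R η ≤ K := (abs_le.mp (hRK η)).2
      nlinarith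
    calc Real.exp (-β * C) * (N * Real.exp (-β * (lam + K)))
        = ∑ _η ∈ Finset.univ.filter (fun η : Config S A => Φ A η = lam),
            Real.exp (-β * C) * Real.exp (-β * (lam + K)) := by
          rw [Finset.sum_const, nsmul_eq_mul, hN]; ring
      _ ≤ _ := Finset.sum_le_sum this
  -- identify the LHS
  have hNat : (Nat.card {η : Config S A // Φ A η = lam} : ℝ) = N := by
    rw [hN, Nat.card_eq_fintype_card, Fintype.card_subtype]
  have hSe : ∑ η : Config S A, Real.exp (-β * (Φ A η - lam)) = Real.exp (β * lam) * T := by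
    rw [hT, Finset.mul_sum]
    apply Finset.sum_congr rfl
    intro η _
    rw [← Real.exp_add]
    congr 1
    ring
  rw [hNat, hSe]
  have hNnonneg : 0 ≤ N := by rw [hN]; positivity
  -- final chain
  have hsig1nonneg : 0 ≤ sig1 := Finset.sum_nonneg fun η _ => (Real.exp_pos _).le
  have hstep : Real.exp (-β * C) * (N * Real.exp (-β * (lam + K))) /
      (Real.exp (-β * C) * (Real.exp (β * K) * T)) ≤ sig1 / sig2 :=
    div_le_div₀ hsig1nonneg hsig1lb hsig2pos hsig2ub
  rw [mul_div_mul_left _ _ (Real.exp_ne_zero _)] at hstep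
  refine le_trans (le_of_eq ?_) hstep
  rw [div_eq_div_iff (by positivity) (by positivity)]
  have hexp : Real.exp (-β * (lam + K)) *
      (Real.exp (2 * β * A.card * potFullNorm Φ) * Real.exp (β * lam)) = Real.exp (β * K) := by
    rw [← Real.exp_add, ← Real.exp_add]
    congr 1
    rw [hK]
    ring
  linear_combination (-(N * T)) * hexp
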